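/- arXiv:1910.02466 — 5 statements merged into one kernel-verified Lean document; each statement's English description precedes it below -/
import Mathlib

section
/- Suppose h₀ ≥ 0 and that the maximal solution (h, f, g) of the forward ODE system satisfies 0 ≤ h(t) < k for all t in its maximal existence interval [0, τ(h₀)). Then for all t ∈ [0, τ(h₀)): f(t) ≤ (1 + t)·e^{C₃ t} and g(t) ≤ a σ_D² e^{C₃ t}·(t + t²/2). -/
open Set

/-- The forward ODE system of Proposition A.1: on a set `s ⊆ ℝ`,
`h' = (2g/α)·h` with `h 0 = h₀`, `f' = 1 + f·((a²σ_D²/(2I))·h − C₀)` with `f 0 = 1`,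
and `g' = aσ_D²·f − (2/α)·g² + g·((a²σ_D²/(2I))·h − C₀)` with `g 0 = 0`. -/
def FwdSol (I : ℕ) (C₀ a σD α h₀ : ℝ) (h f g : ℝ → ℝ) (s : Set ℝ) : Prop :=
  h 0 = h₀ ∧ f 0 = 1 ∧ g 0 = 0 ∧
    ∀ t ∈ s,
      HasDerivWithinAt h (2 * g t / α * h t) s t ∧
      HasDerivWithinAt f (1 + f t * (a ^ 2 * σD ^ 2 / (2 * (I : ℝ)) * h t - C₀)) s t ∧
      HasDerivWithinAt g
        (a * σD ^ 2 * f t - 2 / α * g t ^ 2 +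
          g t * (a ^ 2 * σD ^ 2 / (2 * (I : ℝ)) * h t - C₀)) s t

/-- Grönwall-type helper: if `f' ≤ φ + K·f` whenever `f ≥ 0`, `B' = φ + K·B` with `B ≥ 0`,
and `f 0 ≤ B 0`, then `f ≤ B` on `[0,b]`. -/
lemma gronwall_aux {b K : ℝ} (hK : 0 ≤ K) {f f' φ B : ℝ → ℝ}
    (hf : ContinuousOn f (Icc 0 b))
    (hfd : ∀ x ∈ Ico 0 b, HasDerivWithinAt f (f' x) (Ici x) x)
    (hB : ∀ x, HasDerivAt B (φ x + K * B x) x)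
    (hBpos : ∀ x ∈ Ico 0 b, 0 ≤ B x)
    (h0 : f 0 ≤ B 0)
    (hle : ∀ x ∈ Ico 0 b, 0 ≤ f x → f' x ≤ φ x + K * f x) :
    ∀ x ∈ Icc 0 b, f x ≤ B x := by
  intro x hx
  have key : ∀ ε > (0:ℝ), f x ≤ B x + ε * Real.exp ((K + 1) * x) := by
    intro ε hε
    have hB' : ∀ y : ℝ, HasDerivAt (fun y => B y + ε * Real.exp ((K + 1) * y))
        ((φ y + K * B y) + ε * (Real.exp ((K + 1) * y) * (K + 1))) y := by
      intro y
      exact (hB y).add ((((hasDerivAt_id y).const_mul (K + 1)).exp.const_mul ε).congr_deriv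
        (by simp only [id_eq]; ring))
    have := image_le_of_deriv_right_lt_deriv_boundary (f := f) (f' := f')
      (B := fun y => B y + ε * Real.exp ((K + 1) * y))
      (B' := fun y => (φ y + K * B y) + ε * (Real.exp ((K + 1) * y) * (K + 1)))
      hf hfd
      (by
        beta_reduce
        have : (0:ℝ) < ε * Real.exp ((K + 1) * 0) := by positivity
        linarith)
      hB'
      (by
        intro y hy heq
        beta_reduce at heq ⊢
        have he : (0:ℝ) < ε * Real.exp ((K + 1) * y) := by positivity
        have hBy := hBpos y hy
        have hfy : 0 ≤ f y := by rw [heq]; linarith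
        have h1 := hle y hy hfy
        rw [heq] at h1
        nlinarith)
    exact this hx
  refine le_of_forall_pos_le_add fun δ hδ => ?_
  have he : (0:ℝ) < Real.exp ((K + 1) * x) := Real.exp_pos _
  have := key (δ / Real.exp ((K + 1) * x)) (by positivity)
  rwa [div_mul_cancel₀ _ (ne_of_gt he)] at this

/-- if `h₀ ≥ 0` and `0 ≤ h < k` on the (maximal) interval of existence `[0,τ)`,
then `f t ≤ (1+t)·e^{C₃t}` and `g t ≤ a σ_D² e^{C₃t}(t + t²/2)` there, where
`C₃ = (a²σ_D²/(2I))·k + |C₀|`. -/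
theorem stmt12 (I : ℕ) (hI : 1 ≤ I) (C₀ T a σD α k : ℝ)
    (hT : 0 < T) (ha : 0 < a) (hσD : 0 < σD) (hα : 0 < α) (hk : 0 < k)
    (h₀ τ : ℝ) (hh₀ : 0 ≤ h₀) (hτ : 0 < τ) (h f g : ℝ → ℝ)
    (hsol : FwdSol I C₀ a σD α h₀ h f g (Ico 0 τ))
    (hbound : ∀ t ∈ Ico (0 : ℝ) τ, 0 ≤ h t ∧ h t < k)
    (C₃ : ℝ) (hC₃ : C₃ = a ^ 2 * σD ^ 2 / (2 * (I : ℝ)) * k + |C₀|) :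
    ∀ t ∈ Ico (0 : ℝ) τ,
      f t ≤ (1 + t) * Real.exp (C₃ * t) ∧
      g t ≤ a * σD ^ 2 * Real.exp (C₃ * t) * (t + t ^ 2 / 2) := by
  obtain ⟨hh0, hf0, hg0, hderiv⟩ := hsol
  have hI0 : (0:ℝ) < (I:ℝ) := by exact_mod_cast Nat.lt_of_lt_of_le Nat.zero_lt_one hI
  set c : ℝ := a ^ 2 * σD ^ 2 / (2 * (I : ℝ)) with hc
  have hc0 : 0 < c := by positivity
  have hC₃0 : 0 ≤ C₃ := by
    rw [hC₃]; positivity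
  -- the coefficient bound
  have hq : ∀ x ∈ Ico (0:ℝ) τ, c * h x - C₀ ≤ C₃ := by
    intro x hx
    obtain ⟨h1, h2⟩ := hbound x hx
    have : c * h x ≤ c * k := by nlinarith
    have := neg_abs_le C₀
    rw [hC₃]; nlinarith [le_abs_self C₀]
  -- transfer derivatives to `Ici x`
  have hmem : ∀ x ∈ Ico (0:ℝ) τ, Ico (0:ℝ) τ ∈ nhdsWithin x (Ici x) := by
    intro x hx
    exact mem_nhdsWithin.2 ⟨Iio τ, isOpen_Iio, hx.2, fun y hy => ⟨le_trans hx.1 hy.2, hy.1⟩⟩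
  set F : ℝ → ℝ := fun x => (1 + x) * Real.exp (C₃ * x) with hF
  set G : ℝ → ℝ := fun x => a * σD ^ 2 * Real.exp (C₃ * x) * (x + x ^ 2 / 2) with hG
  have hFpos : ∀ x : ℝ, 0 ≤ x → 0 ≤ F x := fun x hx => by
    show (0:ℝ) ≤ (1 + x) * Real.exp (C₃ * x); positivity
  have hGpos : ∀ x : ℝ, 0 ≤ x → 0 ≤ G x := fun x hx => by
    show (0:ℝ) ≤ a * σD ^ 2 * Real.exp (C₃ * x) * (x + x ^ 2 / 2); positivity
  have hexp : ∀ x : ℝ, HasDerivAt (fun y : ℝ => Real.exp (C₃ * y))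
      (C₃ * Real.exp (C₃ * x)) x := by
    intro x
    have := ((hasDerivAt_id x).const_mul C₃).exp
    simpa [id_eq, mul_comm] using this
  have hpoly : ∀ x : ℝ, HasDerivAt (fun y : ℝ => y + y ^ 2 / 2) (1 + x) x := by
    intro x
    have h1 := (hasDerivAt_id x).add (((hasDerivAt_id x).pow 2).div_const 2)
    simp only [id_eq] at h1
    exact h1.congr_deriv (by push_cast; ring)
  have hFd : ∀ x : ℝ, HasDerivAt F (Real.exp (C₃ * x) + C₃ * F x) x := by
    intro x
    have h1 := ((hasDerivAt_id x).const_add 1).mul (hexp x)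
    simp only [id_eq] at h1
    exact h1.congr_deriv (by simp only [hF]; ring)
  have hGd : ∀ x : ℝ, HasDerivAt G (a * σD ^ 2 * F x + C₃ * G x) x := by
    intro x
    have h1 := ((hexp x).const_mul (a * σD ^ 2)).mul (hpoly x)
    exact h1.congr_deriv (by simp only [hF, hG]; ring)
  -- continuity of f and g on subintervals
  have hsub : ∀ t ∈ Ico (0:ℝ) τ, Icc (0:ℝ) t ⊆ Ico (0:ℝ) τ := fun t ht x hx =>
    ⟨hx.1, lt_of_le_of_lt hx.2 ht.2⟩
  have hfc : ∀ t ∈ Ico (0:ℝ) τ, ContinuousOn f (Icc 0 t) := by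
    intro t ht x hx
    exact ((hderiv x (hsub t ht hx)).2.1.continuousWithinAt).mono (hsub t ht)
  have hgc : ∀ t ∈ Ico (0:ℝ) τ, ContinuousOn g (Icc 0 t) := by
    intro t ht x hx
    exact ((hderiv x (hsub t ht hx)).2.2.continuousWithinAt).mono (hsub t ht)
  have hfd : ∀ x ∈ Ico (0:ℝ) τ,
      HasDerivWithinAt f (1 + f x * (c * h x - C₀)) (Ici x) x := fun x hx =>
    (hderiv x hx).2.1.mono_of_mem_nhdsWithin (hmem x hx)
  have hgd : ∀ x ∈ Ico (0:ℝ) τ,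
      HasDerivWithinAt g (a * σD ^ 2 * f x - 2 / α * g x ^ 2 + g x * (c * h x - C₀))
        (Ici x) x := fun x hx =>
    (hderiv x hx).2.2.mono_of_mem_nhdsWithin (hmem x hx)
  -- Step 1: bound for f on all of `Ico 0 τ`
  have hfB : ∀ t ∈ Ico (0:ℝ) τ, f t ≤ F t := by
    intro t ht
    have hIcoSub : Ico (0:ℝ) t ⊆ Ico (0:ℝ) τ := fun x hx =>
      ⟨hx.1, lt_trans hx.2 ht.2⟩
    refine gronwall_aux hC₃0 (φ := fun x => Real.exp (C₃ * x)) (B := F)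
      (hfc t ht) (fun x hx => hfd x (hIcoSub hx)) hFd
      (fun x hx => hFpos x hx.1) (by simp [hf0, hF]) ?_ t ⟨ht.1, le_refl t⟩
    intro x hx hfx
    have h1 := hq x (hIcoSub hx)
    have h2 : (1:ℝ) ≤ Real.exp (C₃ * x) := by
      rw [← Real.exp_zero]
      exact Real.exp_le_exp.2 (by nlinarith [hx.1])
    have h3 : f x * (c * h x - C₀) ≤ f x * C₃ := mul_le_mul_of_nonneg_left h1 hfx
    show 1 + f x * (c * h x - C₀) ≤ Real.exp (C₃ * x) + C₃ * f x
    nlinarith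
  -- Step 2: bound for g
  intro t ht
  refine ⟨hfB t ht, ?_⟩
  have hIcoSub : Ico (0:ℝ) t ⊆ Ico (0:ℝ) τ := fun x hx => ⟨hx.1, lt_trans hx.2 ht.2⟩
  refine gronwall_aux hC₃0 (φ := fun x => a * σD ^ 2 * F x) (B := G)
    (hgc t ht) (fun x hx => hgd x (hIcoSub hx)) hGd
    (fun x hx => hGpos x hx.1) (by simp [hg0, hG]) ?_ t ⟨ht.1, le_refl t⟩
  intro x hx hgx
  have h1 := hq x (hIcoSub hx)
  have h2 := hfB x (hIcoSub hx)
  have h3 : 0 ≤ 2 / α * g x ^ 2 := by positivity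
  have h4 : a * σD ^ 2 * f x ≤ a * σD ^ 2 * F x :=
    mul_le_mul_of_nonneg_left h2 (by positivity)
  have h5 : g x * (c * h x - C₀) ≤ g x * C₃ := mul_le_mul_of_nonneg_left h1 hgx
  show a * σD ^ 2 * f x - 2 / α * g x ^ 2 + g x * (c * h x - C₀)
      ≤ (fun x => a * σD ^ 2 * F x) x + C₃ * g x
  beta_reduce
  nlinarith
end

section
/- Suppose h₀ > 0 and that the maximal solution (h, f, g) of the forward ODE system satisfies 0 ≤ h(t) < k for all t in its maximal existence interval [0, τ(h₀)). Then h(t) = h₀ · exp( (2/α) ∫₀^t g(s) ds ) and consequently h(t) ≤ h₀ · exp( ∫₀^t (2 a σ_D² e^{C₃ s}(s + s²/2)/α) ds ) for all t ∈ [0, τ(h₀)). -/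
open Set

set_option maxHeartbeats 1000000 in
/-- if `h₀ > 0` and `0 ≤ h < k` on the (maximal) interval of existence `[0,τ)`,
then `h t = h₀ · exp((2/α)∫₀ᵗ g)` and consequently
`h t ≤ h₀ · exp(∫₀ᵗ 2aσ_D² e^{C₃s}(s+s²/2)/α ds)` there. -/
theorem stmt13 (I : ℕ) (hI : 1 ≤ I) (C₀ T a σD α k : ℝ)
    (hT : 0 < T) (ha : 0 < a) (hσD : 0 < σD) (hα : 0 < α) (hk : 0 < k)
    (h₀ τ : ℝ) (hh₀ : 0 < h₀) (hτ : 0 < τ) (h f g : ℝ → ℝ)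
    (hsol : FwdSol I C₀ a σD α h₀ h f g (Ico 0 τ))
    (hbound : ∀ t ∈ Ico (0 : ℝ) τ, 0 ≤ h t ∧ h t < k)
    (C₃ : ℝ) (hC₃ : C₃ = a ^ 2 * σD ^ 2 / (2 * (I : ℝ)) * k + |C₀|) :
    ∀ t ∈ Ico (0 : ℝ) τ,
      h t = h₀ * Real.exp (2 / α * ∫ s in (0 : ℝ)..t, g s) ∧
      h t ≤ h₀ * Real.exp (∫ s in (0 : ℝ)..t,
        2 * a * σD ^ 2 * Real.exp (C₃ * s) * (s + s ^ 2 / 2) / α) := by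
  obtain ⟨hh0, hf0, hg00, hderiv⟩ := hsol
  have hI0 : (0:ℝ) < (I:ℝ) := by exact_mod_cast Nat.lt_of_lt_of_le Nat.zero_lt_one hI
  set c : ℝ := a ^ 2 * σD ^ 2 / (2 * (I : ℝ)) with hc
  have hcpos : 0 < c := by rw [hc]; positivity
  have hC₃pos : 0 < C₃ := by
    rw [hC₃]
    have h1 : 0 < c * k := mul_pos hcpos hk
    exact lt_of_lt_of_le h1 (le_add_of_nonneg_right (abs_nonneg _))
  -- bounds on the coefficient X t = c * h t - C₀
  have hXle : ∀ t ∈ Ico (0:ℝ) τ, c * h t - C₀ ≤ C₃ := by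
    intro t ht
    have h1 := hbound t ht
    have h2 : c * h t ≤ c * k := mul_le_mul_of_nonneg_left h1.2.le hcpos.le
    have h3 : -C₀ ≤ |C₀| := neg_le_abs C₀
    rw [hC₃]; linarith
  have hXge : ∀ t ∈ Ico (0:ℝ) τ, -C₃ ≤ c * h t - C₀ := by
    intro t ht
    have h1 := hbound t ht
    have h2 : 0 ≤ c * h t := mul_nonneg hcpos.le h1.1
    have h3 : C₀ ≤ |C₀| := le_abs_self C₀
    have h4 : 0 < c * k := mul_pos hcpos hk
    rw [hC₃]; linarith
  -- membership lemma to pass from derivatives within `Ico 0 τ` to right derivatives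
  have hmem : ∀ x ∈ Ico (0:ℝ) τ, Ico (0:ℝ) τ ∈ nhdsWithin x (Ici x) := by
    intro x hx
    rw [mem_nhdsWithin]
    exact ⟨Iio τ, isOpen_Iio, hx.2, fun y hy => ⟨le_trans hx.1 hy.2, hy.1⟩⟩
  have hmem' : ∀ x ∈ Ico (0:ℝ) τ, Ico (0:ℝ) τ ∈ nhdsWithin x (Ioi x) := by
    intro x hx
    rw [mem_nhdsWithin]
    exact ⟨Iio τ, isOpen_Iio, hx.2, fun y hy => ⟨le_trans hx.1 (le_of_lt hy.2), hy.1⟩⟩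
  have hDh : ∀ x ∈ Ico (0:ℝ) τ, HasDerivWithinAt h (2 * g x / α * h x) (Ici x) x :=
    fun x hx => ((hderiv x hx).1).mono_of_mem_nhdsWithin (hmem x hx)
  have hDf : ∀ x ∈ Ico (0:ℝ) τ,
      HasDerivWithinAt f (1 + f x * (c * h x - C₀)) (Ici x) x :=
    fun x hx => ((hderiv x hx).2.1).mono_of_mem_nhdsWithin (hmem x hx)
  have hDg : ∀ x ∈ Ico (0:ℝ) τ,
      HasDerivWithinAt g (a * σD ^ 2 * f x - 2 / α * g x ^ 2 + g x * (c * h x - C₀))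
        (Ici x) x :=
    fun x hx => ((hderiv x hx).2.2).mono_of_mem_nhdsWithin (hmem x hx)
  have hch : ContinuousOn h (Ico 0 τ) := fun x hx => ((hderiv x hx).1).continuousWithinAt
  have hcf : ContinuousOn f (Ico 0 τ) := fun x hx => ((hderiv x hx).2.1).continuousWithinAt
  have hcg : ContinuousOn g (Ico 0 τ) := fun x hx => ((hderiv x hx).2.2).continuousWithinAt
  have hsub : ∀ {b : ℝ}, b ∈ Ico (0:ℝ) τ → Icc (0:ℝ) b ⊆ Ico (0:ℝ) τ :=
    fun hb y hy => ⟨hy.1, lt_of_le_of_lt hy.2 hb.2⟩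
  have hsub' : ∀ {b : ℝ}, b ∈ Ico (0:ℝ) τ → ∀ x ∈ Ico (0:ℝ) b, x ∈ Ico (0:ℝ) τ :=
    fun hb x hx => ⟨hx.1, lt_trans hx.2 hb.2⟩
  -- Step 1: lower barrier for f
  have hfl : ∀ t ∈ Ico (0:ℝ) τ, (1 - Real.exp (-(2*C₃)*t))/(2*C₃) ≤ f t := by
    intro t ht
    have key := image_le_of_deriv_right_lt_deriv_boundary
      (f := fun u => -f u) (f' := fun u => -(1 + f u * (c * h u - C₀)))
      (a := 0) (b := t)
      (B := fun u => -((1 - Real.exp (-(2*C₃)*u))/(2*C₃)))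
      (B' := fun u => -Real.exp (-(2*C₃)*u))
      ((hcf.mono (hsub ht)).neg)
      (fun x hx => (hDf x (hsub' ht x hx)).neg)
      (by norm_num [hf0])
      (fun x => by
        have h1 : HasDerivAt (fun u : ℝ => -(2*C₃)*u) (-(2*C₃)) x := by
          simpa using (hasDerivAt_id x).const_mul (-(2*C₃))
        have h3 := ((h1.exp.const_sub 1).div_const (2*C₃)).fun_neg
        refine h3.congr_deriv ?_
        field_simp)
      (by
        intro x hx heq
        have hxτ := hsub' ht x hx
        have hfx : f x = (1 - Real.exp (-(2*C₃)*x))/(2*C₃) := by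
          have h5 : -f x = -((1 - Real.exp (-(2*C₃)*x))/(2*C₃)) := heq
          linarith
        rcases eq_or_lt_of_le hx.1 with h0 | h0
        · exfalso
          rw [← h0] at hfx
          rw [hf0] at hfx
          simp at hfx
        · have he1 : Real.exp (-(2*C₃)*x) < 1 := by
            rw [Real.exp_lt_one_iff]; nlinarith
          have he0 : 0 < Real.exp (-(2*C₃)*x) := Real.exp_pos _
          have hβ0 : 0 ≤ f x := by
            rw [hfx]; apply div_nonneg <;> linarith
          have hfxX : f x * (-C₃) ≤ f x * (c * h x - C₀) :=
            mul_le_mul_of_nonneg_left (hXge x hxτ) hβ0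
          have h2 : C₃ * f x = (1 - Real.exp (-(2*C₃)*x))/2 := by
            rw [hfx]; field_simp
          show -(1 + f x * (c * h x - C₀)) < -Real.exp (-(2*C₃)*x)
          nlinarith [hfxX, h2, he1])
    have h1 := key (right_mem_Icc.2 ht.1)
    linarith
  -- positivity of f
  have hfpos : ∀ x ∈ Ico (0:ℝ) τ, 0 < f x := by
    intro x hx
    rcases eq_or_lt_of_le hx.1 with h0 | h0
    · rw [← h0, hf0]; exact one_pos
    · refine lt_of_lt_of_le ?_ (hfl x hx)
      apply div_pos
      · have : Real.exp (-(2*C₃)*x) < 1 := by rw [Real.exp_lt_one_iff]; nlinarith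
        linarith
      · linarith
  have hfnn : ∀ x ∈ Ico (0:ℝ) τ, 0 ≤ f x := fun x hx => (hfpos x hx).le
  -- Step 2: nonnegativity of g
  have hgnn : ∀ t ∈ Ico (0:ℝ) τ, 0 ≤ g t := by
    intro t ht
    have key := image_le_of_deriv_right_lt_deriv_boundary
      (f := fun u => -g u)
      (f' := fun u => -(a * σD ^ 2 * f u - 2 / α * g u ^ 2 + g u * (c * h u - C₀)))
      (a := 0) (b := t) (B := fun _ => 0) (B' := fun _ => 0)
      ((hcg.mono (hsub ht)).neg)
      (fun x hx => (hDg x (hsub' ht x hx)).neg)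
      (by simp [hg00])
      (fun x => hasDerivAt_const x 0)
      (by
        intro x hx heq
        have hxτ := hsub' ht x hx
        have hgx : g x = 0 := by simpa using heq
        have hfx : 0 < a * σD ^ 2 * f x := by
          have := hfpos x hxτ; positivity
        show -(a * σD ^ 2 * f x - 2 / α * g x ^ 2 + g x * (c * h x - C₀)) < 0
        rw [hgx]
        ring_nf
        nlinarith [hfx])
    have h1 := key (right_mem_Icc.2 ht.1)
    linarith
  -- Step 3: upper bound on f
  have hfub : ∀ t ∈ Ico (0:ℝ) τ, f t ≤ Real.exp (C₃*t) * (1+t) := by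
    intro t ht
    have hE : ∀ x : ℝ, HasDerivAt (fun u => Real.exp (-(C₃*u)))
        (Real.exp (-(C₃*x)) * (-C₃)) x := by
      intro x
      have h1 : HasDerivAt (fun u : ℝ => -(C₃*u)) (-C₃) x := by
        simpa using ((hasDerivAt_id x).const_mul C₃).fun_neg
      exact h1.exp
    have hcE : ContinuousOn (fun u => Real.exp (-(C₃*u))) (Icc 0 t) :=
      (Real.continuous_exp.comp (continuous_const.mul continuous_id).neg).continuousOn
    have key := image_le_of_deriv_right_le_deriv_boundary
      (f := fun u => f u * Real.exp (-(C₃*u)))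
      (f' := fun x => (1 + f x * (c * h x - C₀)) * Real.exp (-(C₃*x)) +
          f x * (Real.exp (-(C₃*x)) * (-C₃)))
      (a := 0) (b := t) (B := fun u => 1 + u) (B' := fun _ => 1)
      ((hcf.mono (hsub ht)).mul hcE)
      (fun x hx => (hDf x (hsub' ht x hx)).mul ((hE x).hasDerivWithinAt))
      (by simp [hf0])
      ((continuous_const.add continuous_id).continuousOn)
      (fun x hx => ((hasDerivAt_id x).const_add 1).hasDerivWithinAt)
      (by
        intro x hx
        have hxτ := hsub' ht x hx
        have hE1 : Real.exp (-(C₃*x)) ≤ 1 := by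
          apply Real.exp_le_one_iff.2; nlinarith [hx.1]
        have hE0 : 0 < Real.exp (-(C₃*x)) := Real.exp_pos _
        have h1 : f x * ((c * h x - C₀) - C₃) ≤ 0 :=
          mul_nonpos_of_nonneg_of_nonpos (hfnn x hxτ) (by linarith [hXle x hxτ])
        have h2 : Real.exp (-(C₃*x)) * (f x * ((c * h x - C₀) - C₃)) ≤ 0 :=
          mul_nonpos_of_nonneg_of_nonpos hE0.le h1
        show (1 + f x * (c * h x - C₀)) * Real.exp (-(C₃*x)) +
            f x * (Real.exp (-(C₃*x)) * (-C₃)) ≤ 1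
        have hkey : (1 + f x * (c * h x - C₀)) * Real.exp (-(C₃*x)) +
            f x * (Real.exp (-(C₃*x)) * (-C₃)) =
            Real.exp (-(C₃*x)) + Real.exp (-(C₃*x)) * (f x * ((c * h x - C₀) - C₃)) := by
          ring
        rw [hkey]
        linarith)
    have h1 := key (right_mem_Icc.2 ht.1)
    have hEe : Real.exp (-(C₃*t)) * Real.exp (C₃*t) = 1 := by
      rw [← Real.exp_add]; simp
    calc f t = f t * (Real.exp (-(C₃*t)) * Real.exp (C₃*t)) := by rw [hEe, mul_one]
      _ = (f t * Real.exp (-(C₃*t))) * Real.exp (C₃*t) := by ring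
      _ ≤ (1+t) * Real.exp (C₃*t) := mul_le_mul_of_nonneg_right h1 (Real.exp_pos _).le
      _ = Real.exp (C₃*t) * (1+t) := by ring
  -- Step 4: upper bound on g
  have hgub : ∀ t ∈ Ico (0:ℝ) τ, g t ≤ a * σD ^ 2 * Real.exp (C₃*t) * (t + t^2/2) := by
    intro t ht
    have hE : ∀ x : ℝ, HasDerivAt (fun u => Real.exp (-(C₃*u)))
        (Real.exp (-(C₃*x)) * (-C₃)) x := by
      intro x
      have h1 : HasDerivAt (fun u : ℝ => -(C₃*u)) (-C₃) x := by
        simpa using ((hasDerivAt_id x).const_mul C₃).fun_neg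
      exact h1.exp
    have hcE : ContinuousOn (fun u => Real.exp (-(C₃*u))) (Icc 0 t) :=
      (Real.continuous_exp.comp (continuous_const.mul continuous_id).neg).continuousOn
    have hBd : ∀ x : ℝ, HasDerivAt (fun u : ℝ => a * σD ^ 2 * (u + u^2/2))
        (a * σD ^ 2 * (1+x)) x := by
      intro x
      have h1 : HasDerivAt (fun u : ℝ => u + u^2/2) (1+x) x := by
        have h2 := (hasDerivAt_id x).fun_add ((hasDerivAt_pow 2 x).div_const 2)
        refine h2.congr_deriv ?_
        simp
      exact h1.const_mul _
    have key := image_le_of_deriv_right_le_deriv_boundary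
      (f := fun u => g u * Real.exp (-(C₃*u)))
      (f' := fun x => (a * σD ^ 2 * f x - 2 / α * g x ^ 2 + g x * (c * h x - C₀)) *
          Real.exp (-(C₃*x)) + g x * (Real.exp (-(C₃*x)) * (-C₃)))
      (a := 0) (b := t)
      (B := fun u => a * σD ^ 2 * (u + u^2/2)) (B' := fun x => a * σD ^ 2 * (1+x))
      ((hcg.mono (hsub ht)).mul hcE)
      (fun x hx => (hDg x (hsub' ht x hx)).mul ((hE x).hasDerivWithinAt))
      (by simp [hg00])
      (fun x _ => (hBd x).continuousAt.continuousWithinAt)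
      (fun x _ => (hBd x).hasDerivWithinAt)
      (by
        intro x hx
        have hxτ := hsub' ht x hx
        have hE0 : 0 < Real.exp (-(C₃*x)) := Real.exp_pos _
        have hEe : Real.exp (-(C₃*x)) * Real.exp (C₃*x) = 1 := by
          rw [← Real.exp_add]; simp
        have h1 : Real.exp (-(C₃*x)) * (g x * ((c * h x - C₀) - C₃)) ≤ 0 :=
          mul_nonpos_of_nonneg_of_nonpos hE0.le
            (mul_nonpos_of_nonneg_of_nonpos (hgnn x hxτ) (by linarith [hXle x hxτ]))
        have h2 : 0 ≤ Real.exp (-(C₃*x)) * (2 / α * g x ^ 2) := by positivity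
        have h3 : a * σD ^ 2 * f x * Real.exp (-(C₃*x)) ≤
            a * σD ^ 2 * (Real.exp (C₃*x) * (1+x)) * Real.exp (-(C₃*x)) := by
          apply mul_le_mul_of_nonneg_right _ hE0.le
          exact mul_le_mul_of_nonneg_left (hfub x hxτ) (by positivity)
        have h4 : a * σD ^ 2 * (Real.exp (C₃*x) * (1+x)) * Real.exp (-(C₃*x)) =
            a * σD ^ 2 * (1+x) := by
          rw [show a * σD ^ 2 * (Real.exp (C₃*x) * (1+x)) * Real.exp (-(C₃*x)) =
            a * σD ^ 2 * (1+x) * (Real.exp (-(C₃*x)) * Real.exp (C₃*x)) from by ring,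
            hEe, mul_one]
        have h5 := h3.trans_eq h4
        show (a * σD ^ 2 * f x - 2 / α * g x ^ 2 + g x * (c * h x - C₀)) *
            Real.exp (-(C₃*x)) + g x * (Real.exp (-(C₃*x)) * (-C₃)) ≤ a * σD ^ 2 * (1+x)
        have hkey : (a * σD ^ 2 * f x - 2 / α * g x ^ 2 + g x * (c * h x - C₀)) *
            Real.exp (-(C₃*x)) + g x * (Real.exp (-(C₃*x)) * (-C₃)) =
            a * σD ^ 2 * f x * Real.exp (-(C₃*x)) -
              Real.exp (-(C₃*x)) * (2 / α * g x ^ 2) +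
              Real.exp (-(C₃*x)) * (g x * ((c * h x - C₀) - C₃)) := by
          ring
        rw [hkey]
        linarith)
    have h1 := key (right_mem_Icc.2 ht.1)
    have hEe : Real.exp (-(C₃*t)) * Real.exp (C₃*t) = 1 := by
      rw [← Real.exp_add]; simp
    calc g t = g t * (Real.exp (-(C₃*t)) * Real.exp (C₃*t)) := by rw [hEe, mul_one]
      _ = (g t * Real.exp (-(C₃*t))) * Real.exp (C₃*t) := by ring
      _ ≤ (a * σD ^ 2 * (t + t^2/2)) * Real.exp (C₃*t) :=
          mul_le_mul_of_nonneg_right h1 (Real.exp_pos _).le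
      _ = a * σD ^ 2 * Real.exp (C₃*t) * (t + t^2/2) := by ring
  -- Main conclusion
  intro t ht
  set G : ℝ → ℝ := fun u => ∫ s in (0:ℝ)..u, g s with hGdef
  -- derivative of the primitive
  have hGd : ∀ x ∈ Ico (0:ℝ) t, HasDerivWithinAt G (g x) (Ici x) x := by
    intro x hx
    have hxτ := hsub' ht x hx
    have hint : IntervalIntegrable g MeasureTheory.volume 0 x := by
      apply ContinuousOn.intervalIntegrable
      rw [uIcc_of_le hx.1]
      exact hcg.mono (hsub ⟨hx.1, hxτ.2⟩)
    exact intervalIntegral.integral_hasDerivWithinAt_right hint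
      ⟨Ico 0 τ, hmem' x hxτ, hcg.aestronglyMeasurable measurableSet_Ico⟩
      ((hcg x hxτ).mono_of_mem_nhdsWithin (hmem' x hxτ))
  have hGc : ContinuousOn G (Icc 0 t) := by
    have hint : MeasureTheory.IntegrableOn g (Icc 0 t) MeasureTheory.volume :=
      (hcg.mono (hsub ht)).integrableOn_Icc
    have := intervalIntegral.continuousOn_primitive_interval
      (by rwa [uIcc_of_le ht.1] : MeasureTheory.IntegrableOn g (uIcc 0 t) MeasureTheory.volume)
    rwa [uIcc_of_le ht.1] at this
  have hcexp : ContinuousOn (fun u => Real.exp (-(2/α) * G u)) (Icc 0 t) :=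
    Real.continuous_exp.comp_continuousOn (continuousOn_const.mul hGc)
  have hconst := constant_of_has_deriv_right_zero
    (f := fun u => h u * Real.exp (-(2/α) * G u))
    ((hch.mono (hsub ht)).mul hcexp)
    (by
      intro x hx
      have hxτ := hsub' ht x hx
      have hd := (hDh x hxτ).fun_mul (((hGd x hx).const_mul (-(2/α))).exp)
      refine hd.congr_deriv ?_
      ring)
  have h1 := hconst t (right_mem_Icc.2 ht.1)
  have hG0 : G 0 = 0 := intervalIntegral.integral_same
  rw [hG0] at h1
  rw [hh0] at h1
  simp only [mul_zero, Real.exp_zero, mul_one] at h1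
  -- the identity
  have hid : h t = h₀ * Real.exp (2/α * G t) := by
    rw [← h1, mul_assoc, ← Real.exp_add]
    rw [show -(2/α) * G t + 2/α * G t = 0 from by ring, Real.exp_zero, mul_one]
  constructor
  · exact hid
  · -- integral comparison
    have hmono : (∫ s in (0:ℝ)..t, 2/α * g s) ≤
        ∫ s in (0:ℝ)..t, 2 * a * σD ^ 2 * Real.exp (C₃ * s) * (s + s ^ 2 / 2) / α := by
      apply intervalIntegral.integral_mono_on ht.1
      · apply ContinuousOn.intervalIntegrable
        rw [uIcc_of_le ht.1]
        exact continuousOn_const.mul (hcg.mono (hsub ht))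
      · apply Continuous.intervalIntegrable
        fun_prop
      · intro s hs
        have hsτ : s ∈ Ico (0:ℝ) τ := ⟨hs.1, lt_of_le_of_lt hs.2 ht.2⟩
        have h2 : 2/α * g s ≤ 2/α * (a * σD ^ 2 * Real.exp (C₃*s) * (s + s^2/2)) :=
          mul_le_mul_of_nonneg_left (hgub s hsτ) (by positivity)
        calc 2/α * g s ≤ 2/α * (a * σD ^ 2 * Real.exp (C₃*s) * (s + s^2/2)) := h2
          _ = 2 * a * σD ^ 2 * Real.exp (C₃ * s) * (s + s ^ 2 / 2) / α := by ring
    have hmono' : 2/α * G t ≤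
        ∫ s in (0:ℝ)..t, 2 * a * σD ^ 2 * Real.exp (C₃ * s) * (s + s ^ 2 / 2) / α := by
      rw [hGdef]
      rw [← intervalIntegral.integral_const_mul]
      exact hmono
    rw [hid]
    exact mul_le_mul_of_nonneg_left (Real.exp_le_exp.2 hmono') hh₀.le
end

section
/- Set C₀ := δ − (a/(2I))·(a I σ_Y² + 2 a L ρ σ_D σ_Y − 2 I μ_Y − 2 L μ_D) − a² σ_D² L²/(2I²). Suppose (h, f, g) is a solution of the forward ODE system on [0, T] (for some initial value h₀ ∈ ℝ, with h(0) = h₀, f(0) = 1, g(0) = 0) such that f(t) > 0 for all t ∈ [0, T]. Then the time-reversed functions ψ(t) := h(T − t) + L²/I, F(t) := f(T − t), and Q₂₂(t) := −g(T − t)/f(T − t) satisfy on [0, T] the equations ψ'(t) = (2 F(t) Q₂₂(t)/α)·(ψ(t) − L²/I), F'(t) = F(t)·(δ − (a² σ_D²/(2I))·ψ(t) − (a/(2I))·(a I σ_Y² + 2 a L ρ σ_D σ_Y − 2 I μ_Y − 2 L μ_D)) − 1, and Q₂₂'(t) = a σ_D² − 2 F(t) Q₂₂(t)²/α + Q₂₂(t)/F(t),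 with terminal values ψ(T) = h₀ + L²/I, F(T) = 1, and Q₂₂(T) = 0. -/
open Set

/-- time reversal.  With `C₀` chosen as in the proof of Lemma 1, if `(h,f,g)`
solves the forward ODE system on `[0,T]` with `f > 0`, then `ψ(t) = h(T−t) + L²/I`,
`F(t) = f(T−t)` and `Q₂₂(t) = −g(T−t)/f(T−t)` solve the corresponding backward equations
with terminal values `ψ(T) = h₀ + L²/I`, `F(T) = 1`, `Q₂₂(T) = 0`. -/
theorem stmt14 (I : ℕ) (hI : 1 ≤ I) (L μD μY ρ δ σY T a σD α : ℝ)
    (hρ : ρ ∈ Icc (-1 : ℝ) 1) (hδ : 0 ≤ δ) (hσY : 0 ≤ σY)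
    (hT : 0 < T) (ha : 0 < a) (hσD : 0 < σD) (hα : 0 < α)
    (C₀ : ℝ)
    (hC₀ : C₀ = δ -
        a * (a * (I : ℝ) * σY ^ 2 + 2 * a * L * ρ * σD * σY - 2 * (I : ℝ) * μY - 2 * L * μD) /
          (2 * (I : ℝ)) -
        a ^ 2 * σD ^ 2 * L ^ 2 / (2 * (I : ℝ) ^ 2))
    (h₀ : ℝ) (h f g : ℝ → ℝ)
    (hsol : FwdSol I C₀ a σD α h₀ h f g (Icc 0 T))
    (hf : ∀ t ∈ Icc (0 : ℝ) T, 0 < f t)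
    (ψ F Q22 : ℝ → ℝ)
    (hψ : ∀ t, ψ t = h (T - t) + L ^ 2 / (I : ℝ))
    (hF : ∀ t, F t = f (T - t))
    (hQ22 : ∀ t, Q22 t = -g (T - t) / f (T - t)) :
    (∀ t ∈ Icc (0 : ℝ) T,
      HasDerivWithinAt ψ (2 * F t * Q22 t / α * (ψ t - L ^ 2 / (I : ℝ))) (Icc 0 T) t ∧
      HasDerivWithinAt F
        (F t * (δ - a ^ 2 * σD ^ 2 / (2 * (I : ℝ)) * ψ t -
          a * (a * (I : ℝ) * σY ^ 2 + 2 * a * L * ρ * σD * σY - 2 * (I : ℝ) * μY - 2 * L * μD) /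
            (2 * (I : ℝ))) - 1) (Icc 0 T) t ∧
      HasDerivWithinAt Q22 (a * σD ^ 2 - 2 * F t * Q22 t ^ 2 / α + Q22 t / F t) (Icc 0 T) t) ∧
    ψ T = h₀ + L ^ 2 / (I : ℝ) ∧ F T = 1 ∧ Q22 T = 0 := by
  obtain ⟨hh0, hf0, hg0, hderiv⟩ := hsol
  have hI0 : (I : ℝ) ≠ 0 := by positivity
  have hα0 : α ≠ 0 := ne_of_gt hα
  refine ⟨?_, ?_, ?_, ?_⟩
  · intro t ht
    have hmem : T - t ∈ Icc (0 : ℝ) T := ⟨by linarith [ht.2], by linarith [ht.1]⟩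
    obtain ⟨hhd, hfd, hgd⟩ := hderiv (T - t) hmem
    have hfpos := hf (T - t) hmem
    have hfne : f (T - t) ≠ 0 := ne_of_gt hfpos
    have hr : HasDerivWithinAt (fun x : ℝ => T - x) (-1) (Icc 0 T) t := by
      simpa using (hasDerivWithinAt_id t (Icc 0 T)).const_sub T
    have hmaps : MapsTo (fun x : ℝ => T - x) (Icc 0 T) (Icc 0 T) := by
      intro x hx
      simp only [mem_Icc] at hx ⊢
      constructor <;> linarith [hx.1, hx.2]
    have hhc : HasDerivWithinAt (fun x => h (T - x))
        ((2 * g (T - t) / α * h (T - t)) * (-1)) (Icc 0 T) t :=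
      HasDerivWithinAt.comp t hhd hr hmaps
    have hfc : HasDerivWithinAt (fun x => f (T - x))
        ((1 + f (T - t) * (a ^ 2 * σD ^ 2 / (2 * (I : ℝ)) * h (T - t) - C₀)) * (-1))
        (Icc 0 T) t :=
      HasDerivWithinAt.comp t hfd hr hmaps
    have hgc : HasDerivWithinAt (fun x => g (T - x))
        ((a * σD ^ 2 * f (T - t) - 2 / α * g (T - t) ^ 2 +
          g (T - t) * (a ^ 2 * σD ^ 2 / (2 * (I : ℝ)) * h (T - t) - C₀)) * (-1))
        (Icc 0 T) t :=
      HasDerivWithinAt.comp t hgd hr hmaps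
    refine ⟨?_, ?_, ?_⟩
    · have key : HasDerivWithinAt (fun x => h (T - x) + L ^ 2 / (I : ℝ))
          (2 * F t * Q22 t / α * (ψ t - L ^ 2 / (I : ℝ))) (Icc 0 T) t := by
        convert hhc.add_const (L ^ 2 / (I : ℝ)) using 1
        case e'_4 => rfl
        case e'_5 => rfl
        rw [hF t, hQ22 t, hψ t]
        field_simp
        ring
      exact key.congr (fun x _ => hψ x) (hψ t)
    · have key : HasDerivWithinAt (fun x => f (T - x))
          (F t * (δ - a ^ 2 * σD ^ 2 / (2 * (I : ℝ)) * ψ t -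
            a * (a * (I : ℝ) * σY ^ 2 + 2 * a * L * ρ * σD * σY - 2 * (I : ℝ) * μY - 2 * L * μD) /
              (2 * (I : ℝ))) - 1) (Icc 0 T) t := by
        convert hfc using 1
        rw [hF t, hψ t, hC₀]
        field_simp
        ring
      exact key.congr (fun x _ => hF x) (hF t)
    · have key : HasDerivWithinAt (fun x => -g (T - x) / f (T - x))
          (a * σD ^ 2 - 2 * F t * Q22 t ^ 2 / α + Q22 t / F t) (Icc 0 T) t := by
        convert (hgc.neg).div hfc hfne using 1
        case e'_4 => rfl
        case e'_5 => rfl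
        case e'_8 => rfl
        rw [hF t, hQ22 t, Pi.neg_apply]
        field_simp
        ring
      exact key.congr (fun x _ => hQ22 x) (hQ22 t)
  · rw [hψ T]; simp [hh0]
  · rw [hF T]; simp [hf0]
  · rw [hQ22 T]; simp [hg0]
end

section
/- Let θ_{1,0}, …, θ_{I,0} ∈ ℝ satisfy Σ_{i=1}^I θ_{i,0} = L. Then Σ_{i=1}^I θ_{i,0}² ≥ L²/I, with equality if and only if θ_{i,0} = L/I for all i. Moreover, if ψ : [0, T] → ℝ is differentiable with ψ(0) = Σ_{i=1}^I θ_{i,0}² and ψ'(t) = c(t)·(ψ(t) − L²/I) for some continuous function c, then ψ(t) ≥ L²/I for all t ∈ [0, T], and the Nash equilibrium interest rate satisfies r(t) ≤ r^Radner for all t ∈ [0, T]; both inequalities are strict (for all t) whenever θ_{i,0} ≠ L/I for some i. -/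
open Set

open intervalIntegral in
/-- ODE uniqueness: solution of `ψ' = c (ψ - K)` on `[0,T]`. -/
lemma stmt16_ode_aux {T K : ℝ} {ψ c : ℝ → ℝ} (hc : Continuous c)
    (hψ : ∀ t ∈ Icc (0 : ℝ) T, HasDerivWithinAt ψ (c t * (ψ t - K)) (Icc 0 T) t) :
    ∀ t ∈ Icc (0 : ℝ) T, ψ t - K = (ψ 0 - K) * Real.exp (∫ s in (0:ℝ)..t, c s) := by
  set F : ℝ → ℝ := fun t => ∫ s in (0:ℝ)..t, c s with hF
  have hFd : ∀ t : ℝ, HasDerivAt F (c t) t := fun t =>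
    integral_hasDerivAt_right (hc.intervalIntegrable 0 t)
      hc.aestronglyMeasurable.stronglyMeasurableAtFilter hc.continuousAt
  set g : ℝ → ℝ := fun t => (ψ t - K) * Real.exp (-(F t)) with hg
  have hgd : ∀ t ∈ Icc (0 : ℝ) T, HasDerivWithinAt g 0 (Icc 0 T) t := by
    intro t ht
    have h1 : HasDerivWithinAt (fun u => Real.exp (-(F u)))
        (Real.exp (-(F t)) * (-(c t))) (Icc 0 T) t :=
      (((hFd t).neg).exp).hasDerivWithinAt
    have : HasDerivWithinAt g (c t * (ψ t - K) * Real.exp (-(F t)) +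
        (ψ t - K) * (Real.exp (-(F t)) * -c t)) (Icc 0 T) t :=
      ((hψ t ht).sub_const K).fun_mul h1
    convert this using 1
    ring
  have hgc : ContinuousOn g (Icc 0 T) := fun t ht => (hgd t ht).continuousWithinAt
  have hconst : ∀ t ∈ Icc (0 : ℝ) T, g t = g 0 := by
    apply constant_of_has_deriv_right_zero hgc
    intro x hx
    refine (hgd x ⟨hx.1, le_of_lt hx.2⟩).mono_of_mem_nhdsWithin ?_
    refine mem_nhdsWithin.2 ⟨Iio T, isOpen_Iio, hx.2, ?_⟩
    rintro y ⟨hy1, hy2⟩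
    exact ⟨le_trans hx.1 hy2, le_of_lt hy1⟩
  intro t ht
  have h0 : g 0 = ψ 0 - K := by
    simp [hg, hF, intervalIntegral.integral_same]
  have := hconst t ht
  rw [h0] at this
  have h2 : (ψ t - K) * (Real.exp (-(F t)) * Real.exp (F t)) = (ψ 0 - K) * Real.exp (F t) := by
    rw [← mul_assoc]; exact congrArg (· * Real.exp (F t)) this
  rw [← Real.exp_add, neg_add_cancel, Real.exp_zero, mul_one] at h2
  simpa [hF] using h2

/-- Cauchy–Schwarz for the initial endowments and the interest-rate ordering.
If `∑ᵢ θᵢ₀ = L` then `∑ᵢ θᵢ₀² ≥ L²/I` with equality iff all `θᵢ₀ = L/I`; moreover, if `ψ`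
solves `ψ' = c(t)(ψ − L²/I)` with `ψ(0) = ∑ᵢ θᵢ₀²` for a continuous `c`, then `ψ ≥ L²/I`
on `[0,T]` and the Nash rate `r(t)` is `≤ r^Radner`, with strict inequalities whenever
some `θᵢ₀ ≠ L/I`. -/
theorem stmt16 (I : ℕ) (hI : 1 ≤ I) (L μD μY ρ δ σY T a σD : ℝ)
    (hρ : ρ ∈ Icc (-1 : ℝ) 1) (hδ : 0 ≤ δ) (hσY : 0 ≤ σY)
    (hT : 0 < T) (ha : 0 < a) (hσD : 0 < σD)
    (θ0 : Fin I → ℝ) (hsum : ∑ i, θ0 i = L) :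
    L ^ 2 / (I : ℝ) ≤ ∑ i, θ0 i ^ 2 ∧
    ((∑ i, θ0 i ^ 2) = L ^ 2 / (I : ℝ) ↔ ∀ i, θ0 i = L / (I : ℝ)) ∧
    (∀ ψ c : ℝ → ℝ, ContinuousOn c (Icc 0 T) →
      ψ 0 = ∑ i, θ0 i ^ 2 →
      (∀ t ∈ Icc (0 : ℝ) T,
        HasDerivWithinAt ψ (c t * (ψ t - L ^ 2 / (I : ℝ))) (Icc 0 T) t) →
      (∀ t ∈ Icc (0 : ℝ) T, L ^ 2 / (I : ℝ) ≤ ψ t ∧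
        δ - a ^ 2 * σD ^ 2 / (2 * (I : ℝ)) * ψ t -
            a * (a * (I : ℝ) * σY ^ 2 + 2 * a * L * ρ * σD * σY - 2 * (I : ℝ) * μY -
              2 * L * μD) / (2 * (I : ℝ)) ≤
          δ - a ^ 2 * σD ^ 2 * L ^ 2 / (2 * (I : ℝ) ^ 2) -
            a * (a * (I : ℝ) * σY ^ 2 + 2 * a * L * ρ * σD * σY - 2 * (I : ℝ) * μY -
              2 * L * μD) / (2 * (I : ℝ))) ∧
      ((∃ i, θ0 i ≠ L / (I : ℝ)) → ∀ t ∈ Icc (0 : ℝ) T, L ^ 2 / (I : ℝ) < ψ t ∧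
        δ - a ^ 2 * σD ^ 2 / (2 * (I : ℝ)) * ψ t -
            a * (a * (I : ℝ) * σY ^ 2 + 2 * a * L * ρ * σD * σY - 2 * (I : ℝ) * μY -
              2 * L * μD) / (2 * (I : ℝ)) <
          δ - a ^ 2 * σD ^ 2 * L ^ 2 / (2 * (I : ℝ) ^ 2) -
            a * (a * (I : ℝ) * σY ^ 2 + 2 * a * L * ρ * σD * σY - 2 * (I : ℝ) * μY -
              2 * L * μD) / (2 * (I : ℝ)))) := by
  have hIpos : (0 : ℝ) < I := by exact_mod_cast hI
  set K : ℝ := L ^ 2 / (I : ℝ) with hK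
  -- key identity
  have hkey : ∑ i, (θ0 i - L / (I : ℝ)) ^ 2 = (∑ i, θ0 i ^ 2) - K := by
    have h1 : ∀ i ∈ Finset.univ, (θ0 i - L / (I : ℝ)) ^ 2
        = θ0 i ^ 2 - 2 * (L / (I : ℝ)) * θ0 i + (L / (I : ℝ)) ^ 2 := fun i _ => by ring
    rw [Finset.sum_congr rfl h1, Finset.sum_add_distrib, Finset.sum_sub_distrib,
      ← Finset.mul_sum, hsum, Finset.sum_const, Finset.card_univ, Fintype.card_fin]
    rw [hK]
    field_simp
    rw [nsmul_eq_mul]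
    field_simp
    ring
  have hnn : 0 ≤ ∑ i, (θ0 i - L / (I : ℝ)) ^ 2 :=
    Finset.sum_nonneg fun i _ => sq_nonneg _
  have hpart1 : K ≤ ∑ i, θ0 i ^ 2 := by linarith [hkey ▸ hnn]
  have hiff : (∑ i, θ0 i ^ 2) = K ↔ ∀ i, θ0 i = L / (I : ℝ) := by
    constructor
    · intro h
      have hz : ∑ i, (θ0 i - L / (I : ℝ)) ^ 2 = 0 := by rw [hkey, h]; ring
      intro i
      have := (Finset.sum_eq_zero_iff_of_nonneg fun j _ => sq_nonneg _).1 hz i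
        (Finset.mem_univ i)
      have := pow_eq_zero_iff (n := 2) (by norm_num) |>.1 this
      linarith [sub_eq_zero.1 this]
    · intro h
      have : ∑ i, (θ0 i - L / (I : ℝ)) ^ 2 = 0 :=
        Finset.sum_eq_zero fun i _ => by rw [h i]; ring
      linarith [hkey ▸ this]
  refine ⟨hpart1, hiff, ?_⟩
  intro ψ c hc hψ0 hψ'
  -- extend c continuously to ℝ
  set proj : ℝ → ℝ := fun t => max 0 (min t T) with hproj
  have hprojmem : ∀ t, proj t ∈ Icc (0 : ℝ) T := fun t =>
    ⟨le_max_left _ _, max_le hT.le (min_le_right _ _)⟩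
  have hprojcont : Continuous proj := continuous_const.max (continuous_id.min continuous_const)
  have hc' : Continuous (c ∘ proj) := hc.comp_continuous hprojcont hprojmem
  have hprojeq : ∀ t ∈ Icc (0 : ℝ) T, proj t = t := by
    rintro t ⟨ht0, htT⟩
    simp [hproj, min_eq_left htT, max_eq_right ht0]
  have hψ'' : ∀ t ∈ Icc (0 : ℝ) T,
      HasDerivWithinAt ψ ((c ∘ proj) t * (ψ t - K)) (Icc 0 T) t := by
    intro t ht
    have := hψ' t ht
    rwa [show (c ∘ proj) t = c t by simp [Function.comp, hprojeq t ht]]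
  have hsol := stmt16_ode_aux hc' hψ''
  -- auxiliary algebraic fact for the rate comparison
  have hA : 0 < a ^ 2 * σD ^ 2 / (2 * (I : ℝ)) := by positivity
  have hAK : a ^ 2 * σD ^ 2 * L ^ 2 / (2 * (I : ℝ) ^ 2)
      = a ^ 2 * σD ^ 2 / (2 * (I : ℝ)) * K := by
    rw [hK, div_mul_div_comm]; ring
  constructor
  · intro t ht
    have h1 : K ≤ ψ t := by
      have := hsol t ht
      nlinarith [Real.exp_pos (∫ s in (0:ℝ)..t, (c ∘ proj) s), hψ0 ▸ hpart1]
    refine ⟨h1, ?_⟩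
    rw [hAK]
    have : a ^ 2 * σD ^ 2 / (2 * (I : ℝ)) * K ≤ a ^ 2 * σD ^ 2 / (2 * (I : ℝ)) * ψ t :=
      mul_le_mul_of_nonneg_left h1 hA.le
    linarith
  · rintro ⟨i, hi⟩ t ht
    have hpos : K < ∑ j, θ0 j ^ 2 := by
      rcases lt_or_eq_of_le hpart1 with h | h
      · exact h
      · exact absurd ((hiff.1 h.symm) i) hi
    have h1 : K < ψ t := by
      have := hsol t ht
      nlinarith [Real.exp_pos (∫ s in (0:ℝ)..t, (c ∘ proj) s), hψ0 ▸ hpos]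
    refine ⟨h1, ?_⟩
    rw [hAK]
    have : a ^ 2 * σD ^ 2 / (2 * (I : ℝ)) * K < a ^ 2 * σD ^ 2 / (2 * (I : ℝ)) * ψ t :=
      mul_lt_mul_of_pos_left h1 hA
    linarith
end

section
/- The competitive Radner and Pareto-efficient equilibrium interest rates satisfy r^Pareto − r^Radner = a² σ_Y² (1 − ρ²)(I − 1)/(2I) ≥ 0; in particular r^Radner ≤ r^Pareto, with equality if and only if ρ² = 1, σ_Y = 0, or I = 1. -/
open Set

/-- `r^Pareto − r^Radner = a²σ_Y²(1−ρ²)(I−1)/(2I) ≥ 0`; in particular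
`r^Radner ≤ r^Pareto`, with equality iff `ρ² = 1`, `σ_Y = 0`, or `I = 1`. -/
theorem stmt17 (I : ℕ) (hI : 1 ≤ I) (L μD μY ρ δ σY a σD : ℝ)
    (hρ : ρ ∈ Icc (-1 : ℝ) 1) (hδ : 0 ≤ δ) (hσY : 0 ≤ σY) (ha : 0 < a) (hσD : 0 < σD)
    (rRadner rPareto : ℝ)
    (hR : rRadner = δ + a / (I : ℝ) * (L * μD + (I : ℝ) * μY) -
      a ^ 2 / (2 * (I : ℝ) ^ 2) *
        ((I : ℝ) ^ 2 * σY ^ 2 + 2 * (I : ℝ) * L * ρ * σD * σY + L ^ 2 * σD ^ 2))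
    (hP : rPareto = δ + a / (I : ℝ) * (L * μD + (I : ℝ) * μY) -
      a ^ 2 / (2 * (I : ℝ) ^ 2) *
        ((L * σD + (I : ℝ) * σY * ρ) ^ 2 + (I : ℝ) * σY ^ 2 * (1 - ρ ^ 2))) :
    rPareto - rRadner = a ^ 2 * σY ^ 2 * (1 - ρ ^ 2) * ((I : ℝ) - 1) / (2 * (I : ℝ)) ∧
    rRadner ≤ rPareto ∧
    (rRadner = rPareto ↔ ρ ^ 2 = 1 ∨ σY = 0 ∨ I = 1) := by
  have hn : (0 : ℝ) < (I : ℝ) := by exact_mod_cast Nat.lt_of_lt_of_le Nat.zero_lt_one hI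
  have hn' : ((I : ℝ)) ≠ 0 := ne_of_gt hn
  have key : rPareto - rRadner
      = a ^ 2 * σY ^ 2 * (1 - ρ ^ 2) * ((I : ℝ) - 1) / (2 * (I : ℝ)) := by
    subst hR hP; field_simp; ring
  have hρ2 : (0 : ℝ) ≤ 1 - ρ ^ 2 := by
    nlinarith [hρ.1, hρ.2]
  have hI1 : (0 : ℝ) ≤ (I : ℝ) - 1 := by
    have : (1 : ℝ) ≤ (I : ℝ) := by exact_mod_cast hI
    linarith
  have hnum : 0 ≤ a ^ 2 * σY ^ 2 * (1 - ρ ^ 2) * ((I : ℝ) - 1) := by positivity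
  have hle : rRadner ≤ rPareto := by
    have := div_nonneg hnum (by linarith : (0:ℝ) ≤ 2 * (I : ℝ))
    linarith [key ▸ this]
  refine ⟨key, hle, ?_⟩
  constructor
  · intro h
    have h0 : a ^ 2 * σY ^ 2 * (1 - ρ ^ 2) * ((I : ℝ) - 1) = 0 := by
      have : rPareto - rRadner = 0 := by rw [h]; ring
      rw [key] at this
      field_simp at this
      rwa [mul_zero] at this
    have ha2 : a ^ 2 ≠ 0 := by positivity
    rcases mul_eq_zero.1 h0 with h1 | h2
    · rcases mul_eq_zero.1 h1 with h3 | h4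
      · rcases mul_eq_zero.1 h3 with h5 | h6
        · exact absurd h5 ha2
        · exact Or.inr (Or.inl (pow_eq_zero_iff (by norm_num)|>.1 h6))
      · exact Or.inl (by linarith)
    · right; right
      have : (I : ℝ) = 1 := by linarith
      exact_mod_cast this
  · rintro (h | h | h)
    · have : rPareto - rRadner = 0 := by rw [key, h]; ring_nf
      linarith
    · have : rPareto - rRadner = 0 := by rw [key, h]; ring_nf
      linarith
    · have : rPareto - rRadner = 0 := by rw [key, h]; norm_num
      linarith
end
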